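/- Let f : ℝ → ℝ be of class C^6 and fix x ∈ ℝ. Then the six-point finite-difference stencil on half-integer offsets, D2_h := [−5·f(x − 5h/2) + 39·f(x − 3h/2) − 34·f(x − h/2) − 34·f(x + h/2) + 39·f(x + 3h/2) − 5·f(x + 5h/2)]/(48h²), approximates f''(x) to fourth order: there exist C > 0 and δ > 0 such that for all 0 < h < δ, |D2_h − f''(x)| ≤ C·h⁴. -/

import Mathlib

open Set

lemma idw_eq {f : ℝ → ℝ} (hf : ContDiff ℝ 6 f) {a b : ℝ} (hab : a < b) {k : ℕ}
    (hk : k ≤ 6) {y : ℝ} (hy : y ∈ Icc a b) :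
    iteratedDerivWithin k f (Icc a b) y = iteratedDeriv k f y := by
  have h := (contDiff_iff_ftaylorSeries.mp hf).hasFTaylorSeriesUpToOn (Icc a b)
  have h2 := h.eq_iteratedFDerivWithin_of_uniqueDiffOn (by exact_mod_cast hk)
    (uniqueDiffOn_Icc hab) hy
  rw [iteratedDerivWithin_eq_iteratedFDerivWithin, iteratedDeriv_eq_iteratedFDeriv, ← h2]
  rfl

lemma taylor_right (f : ℝ → ℝ) (hf : ContDiff ℝ 6 f) (x M : ℝ)
    (hM : ∀ y ∈ Icc (x - 3) (x + 3), |iteratedDeriv 6 f y| ≤ M)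
    (a : ℝ) (ha0 : 0 < a) (ha3 : a ≤ 3) :
    |f (x + a) - (f x + iteratedDeriv 1 f x * a + iteratedDeriv 2 f x * a ^ 2 / 2
      + iteratedDeriv 3 f x * a ^ 3 / 6 + iteratedDeriv 4 f x * a ^ 4 / 24
      + iteratedDeriv 5 f x * a ^ 5 / 120)| ≤ M * a ^ 6 := by
  have hab : x < x + a := by linarith
  have hsub : Icc x (x + a) ⊆ Icc (x - 3) (x + 3) :=
    Icc_subset_Icc (by linarith) (by linarith)
  have hC : ∀ y ∈ Icc x (x + a), ‖iteratedDerivWithin 6 f (Icc x (x + a)) y‖ ≤ M := by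
    intro y hy
    rw [idw_eq hf hab le_rfl hy, Real.norm_eq_abs]
    exact hM y (hsub hy)
  have key := taylor_mean_remainder_bound (n := 5) hab.le
    (hf.contDiffOn.of_le (by norm_num)) (right_mem_Icc.mpr hab.le) hC
  have e : ∀ k, k ≤ 6 → iteratedDerivWithin k f (Icc x (x + a)) x = iteratedDeriv k f x :=
    fun k hk => idw_eq hf hab hk (left_mem_Icc.mpr hab.le)
  rw [taylor_within_apply] at key
  simp only [Finset.sum_range_succ, Finset.sum_range_zero, smul_eq_mul, Real.norm_eq_abs] at key
  rw [e 0 (by norm_num), e 1 (by norm_num), e 2 (by norm_num), e 3 (by norm_num),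
    e 4 (by norm_num), e 5 (by norm_num), iteratedDeriv_zero] at key
  have hM0 : 0 ≤ M := le_trans (abs_nonneg _) (hM x (by constructor <;> linarith))
  have ha6 : 0 ≤ a ^ 6 := by positivity
  calc |f (x + a) - (f x + iteratedDeriv 1 f x * a + iteratedDeriv 2 f x * a ^ 2 / 2
      + iteratedDeriv 3 f x * a ^ 3 / 6 + iteratedDeriv 4 f x * a ^ 4 / 24
      + iteratedDeriv 5 f x * a ^ 5 / 120)|
      = |f (x + a) - (0 + (↑(Nat.factorial 0) : ℝ)⁻¹ * (x + a - x) ^ 0 * f x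
        + (↑(Nat.factorial 1) : ℝ)⁻¹ * (x + a - x) ^ 1 * iteratedDeriv 1 f x
        + (↑(Nat.factorial 2) : ℝ)⁻¹ * (x + a - x) ^ 2 * iteratedDeriv 2 f x
        + (↑(Nat.factorial 3) : ℝ)⁻¹ * (x + a - x) ^ 3 * iteratedDeriv 3 f x
        + (↑(Nat.factorial 4) : ℝ)⁻¹ * (x + a - x) ^ 4 * iteratedDeriv 4 f x
        + (↑(Nat.factorial 5) : ℝ)⁻¹ * (x + a - x) ^ 5 * iteratedDeriv 5 f x)| := by
        congr 1
        simp [Nat.factorial]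
        ring
    _ ≤ M * (x + a - x) ^ 6 / ↑(Nat.factorial 5) := key
    _ ≤ M * a ^ 6 := by
        simp only [add_sub_cancel_left, Nat.factorial]
        norm_num
        nlinarith

lemma taylor_left (f : ℝ → ℝ) (hf : ContDiff ℝ 6 f) (x M : ℝ)
    (hM : ∀ y ∈ Icc (x - 3) (x + 3), |iteratedDeriv 6 f y| ≤ M)
    (a : ℝ) (ha0 : 0 < a) (ha3 : a ≤ 3) :
    |f (x - a) - (f x - iteratedDeriv 1 f x * a + iteratedDeriv 2 f x * a ^ 2 / 2
      - iteratedDeriv 3 f x * a ^ 3 / 6 + iteratedDeriv 4 f x * a ^ 4 / 24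
      - iteratedDeriv 5 f x * a ^ 5 / 120)| ≤ M * a ^ 6 := by
  set g : ℝ → ℝ := fun t => f (2 * x - t) with hg
  have hgc : ContDiff ℝ 6 g := hf.comp (contDiff_const.sub contDiff_id)
  have hgd : ∀ k : ℕ, ∀ y : ℝ, iteratedDeriv k g y = (-1 : ℝ) ^ k * iteratedDeriv k f (2 * x - y) := by
    intro k y
    have h2 := iteratedDeriv_comp_neg (𝕜 := ℝ) k (fun z => f (2 * x + z)) y
    rw [iteratedDeriv_comp_const_add] at h2
    have h1 : g = fun t => (fun z => f (2 * x + z)) (-t) := by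
      funext t; simp [hg, sub_eq_add_neg]
    rw [h1, h2]
    simp [sub_eq_add_neg, smul_eq_mul]
  have hMg : ∀ y ∈ Icc (x - 3) (x + 3), |iteratedDeriv 6 g y| ≤ M := by
    intro y hy
    rw [hgd 6 y]
    simp only [abs_mul, abs_pow, abs_neg, abs_one, one_pow, one_mul]
    exact hM (2 * x - y) ⟨by linarith [hy.2], by linarith [hy.1]⟩
  have key := taylor_right g hgc x M hMg a ha0 ha3
  have hgx : ∀ k : ℕ, iteratedDeriv k g x = (-1 : ℝ) ^ k * iteratedDeriv k f x := by
    intro k; rw [hgd]; congr 1; ring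
  have hgxa : g (x + a) = f (x - a) := by simp [hg]; ring_nf
  rw [hgxa, hgx 1, hgx 2, hgx 3, hgx 4, hgx 5] at key
  have hg0 : g x = f x := by simp [hg]; ring_nf
  rw [hg0] at key
  convert key using 2
  ring


set_option maxHeartbeats 2000000 in

/-- The six-point half-integer-offset stencil of the Old A-WENO scheme approximates
the second derivative to fourth order. -/
theorem old_scheme_second_derivative_stencil_fourth_order
    (f : ℝ → ℝ) (hf : ContDiff ℝ 6 f) (x : ℝ) :
    ∃ C > (0 : ℝ), ∃ δ > (0 : ℝ), ∀ h : ℝ, 0 < h → h < δ →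
      |(-5 * f (x - 5 * h / 2) + 39 * f (x - 3 * h / 2) - 34 * f (x - h / 2)
          - 34 * f (x + h / 2) + 39 * f (x + 3 * h / 2) - 5 * f (x + 5 * h / 2))
          / (48 * h ^ 2)
        - iteratedDeriv 2 f x| ≤ C * h ^ 4 := by
  obtain ⟨M, hM⟩ := (isCompact_Icc (a := x - 3) (b := x + 3)).exists_bound_of_continuousOn
    ((hf.continuous_iteratedDeriv 6 (by norm_cast)).continuousOn)
  have hM' : ∀ y ∈ Icc (x - 3) (x + 3), |iteratedDeriv 6 f y| ≤ M := by
    intro y hy; simpa using hM y hy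
  have hM0 : 0 ≤ M := le_trans (abs_nonneg _) (hM' x (by constructor <;> linarith))
  refine ⟨70 * M + 1, by linarith, 1, one_pos, fun h h0 h1 => ?_⟩
  have b1 := taylor_right f hf x M hM' (h / 2) (by linarith) (by linarith)
  have b3 := taylor_right f hf x M hM' (3 * h / 2) (by linarith) (by linarith)
  have b5 := taylor_right f hf x M hM' (5 * h / 2) (by linarith) (by linarith)
  have c1 := taylor_left f hf x M hM' (h / 2) (by linarith) (by linarith)
  have c3 := taylor_left f hf x M hM' (3 * h / 2) (by linarith) (by linarith)
  have c5 := taylor_left f hf x M hM' (5 * h / 2) (by linarith) (by linarith)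
  set T0 := f x with hT0
  set T1 := iteratedDeriv 1 f x with hT1
  set T2 := iteratedDeriv 2 f x with hT2
  set T3 := iteratedDeriv 3 f x with hT3
  set T4 := iteratedDeriv 4 f x with hT4
  set T5 := iteratedDeriv 5 f x with hT5
  obtain ⟨e1, he1, hbe1⟩ : ∃ E, f (x + h / 2) = T0 + T1 * (h / 2) + T2 * (h / 2) ^ 2 / 2
      + T3 * (h / 2) ^ 3 / 6 + T4 * (h / 2) ^ 4 / 24 + T5 * (h / 2) ^ 5 / 120 + E ∧
      |E| ≤ M * (h / 2) ^ 6 := ⟨_, by ring, b1⟩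
  obtain ⟨e3, he3, hbe3⟩ : ∃ E, f (x + 3 * h / 2) = T0 + T1 * (3 * h / 2)
      + T2 * (3 * h / 2) ^ 2 / 2 + T3 * (3 * h / 2) ^ 3 / 6 + T4 * (3 * h / 2) ^ 4 / 24
      + T5 * (3 * h / 2) ^ 5 / 120 + E ∧ |E| ≤ M * (3 * h / 2) ^ 6 := ⟨_, by ring, b3⟩
  obtain ⟨e5, he5, hbe5⟩ : ∃ E, f (x + 5 * h / 2) = T0 + T1 * (5 * h / 2)
      + T2 * (5 * h / 2) ^ 2 / 2 + T3 * (5 * h / 2) ^ 3 / 6 + T4 * (5 * h / 2) ^ 4 / 24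
      + T5 * (5 * h / 2) ^ 5 / 120 + E ∧ |E| ≤ M * (5 * h / 2) ^ 6 := ⟨_, by ring, b5⟩
  obtain ⟨d1, hd1, hbd1⟩ : ∃ E, f (x - h / 2) = T0 - T1 * (h / 2) + T2 * (h / 2) ^ 2 / 2
      - T3 * (h / 2) ^ 3 / 6 + T4 * (h / 2) ^ 4 / 24 - T5 * (h / 2) ^ 5 / 120 + E ∧
      |E| ≤ M * (h / 2) ^ 6 := ⟨_, by ring, c1⟩
  obtain ⟨d3, hd3, hbd3⟩ : ∃ E, f (x - 3 * h / 2) = T0 - T1 * (3 * h / 2)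
      + T2 * (3 * h / 2) ^ 2 / 2 - T3 * (3 * h / 2) ^ 3 / 6 + T4 * (3 * h / 2) ^ 4 / 24
      - T5 * (3 * h / 2) ^ 5 / 120 + E ∧ |E| ≤ M * (3 * h / 2) ^ 6 := ⟨_, by ring, c3⟩
  obtain ⟨d5, hd5, hbd5⟩ : ∃ E, f (x - 5 * h / 2) = T0 - T1 * (5 * h / 2)
      + T2 * (5 * h / 2) ^ 2 / 2 - T3 * (5 * h / 2) ^ 3 / 6 + T4 * (5 * h / 2) ^ 4 / 24
      - T5 * (5 * h / 2) ^ 5 / 120 + E ∧ |E| ≤ M * (5 * h / 2) ^ 6 := ⟨_, by ring, c5⟩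
  have hh2 : (0 : ℝ) < 48 * h ^ 2 := by positivity
  have hnum : -5 * f (x - 5 * h / 2) + 39 * f (x - 3 * h / 2) - 34 * f (x - h / 2)
          - 34 * f (x + h / 2) + 39 * f (x + 3 * h / 2) - 5 * f (x + 5 * h / 2)
      = 48 * h ^ 2 * T2 + (-5 * d5 + 39 * d3 - 34 * d1 - 34 * e1 + 39 * e3 - 5 * e5) := by
    rw [he1, he3, he5, hd1, hd3, hd5]
    ring
  have hnum2 : (48 * h ^ 2 * T2 + (-5 * d5 + 39 * d3 - 34 * d1 - 34 * e1 + 39 * e3 - 5 * e5))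
        / (48 * h ^ 2) - T2
      = (-5 * d5 + 39 * d3 - 34 * d1 - 34 * e1 + 39 * e3 - 5 * e5) / (48 * h ^ 2) := by
    field_simp
    ring
  rw [hnum, hnum2, abs_div, abs_of_pos hh2, div_le_iff₀ hh2]
  have habs : |-5 * d5 + 39 * d3 - 34 * d1 - 34 * e1 + 39 * e3 - 5 * e5|
      ≤ 5 * |d5| + 39 * |d3| + 34 * |d1| + 34 * |e1| + 39 * |e3| + 5 * |e5| := by
    calc |-5 * d5 + 39 * d3 - 34 * d1 - 34 * e1 + 39 * e3 - 5 * e5|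
        ≤ |-5 * d5 + 39 * d3 - 34 * d1 - 34 * e1 + 39 * e3| + |5 * e5| := by
          rw [sub_eq_add_neg, ← abs_neg (5 * e5)]; exact abs_add_le _ _
      _ ≤ |-5 * d5 + 39 * d3 - 34 * d1 - 34 * e1| + |39 * e3| + |5 * e5| := by
          gcongr; exact abs_add_le _ _
      _ ≤ |-5 * d5 + 39 * d3 - 34 * d1| + |34 * e1| + |39 * e3| + |5 * e5| := by
          gcongr ?_ + _ + _
          rw [sub_eq_add_neg, ← abs_neg (34 * e1)]; exact abs_add_le _ _
      _ ≤ |-5 * d5 + 39 * d3| + |34 * d1| + |34 * e1| + |39 * e3| + |5 * e5| := by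
          gcongr ?_ + _ + _ + _
          rw [sub_eq_add_neg, ← abs_neg (34 * d1)]; exact abs_add_le _ _
      _ ≤ |-5 * d5| + |39 * d3| + |34 * d1| + |34 * e1| + |39 * e3| + |5 * e5| := by
          gcongr ?_ + _ + _ + _ + _
          exact abs_add_le _ _
      _ = 5 * |d5| + 39 * |d3| + 34 * |d1| + 34 * |e1| + 39 * |e3| + 5 * |e5| := by
          simp [abs_mul]
  refine le_trans habs ?_
  have E1 : (h / 2) ^ 6 = 1 / 64 * h ^ 6 := by ring
  have E3 : (3 * h / 2) ^ 6 = 729 / 64 * h ^ 6 := by ring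
  have E5 : (5 * h / 2) ^ 6 = 15625 / 64 * h ^ 6 := by ring
  rw [E1] at hbe1 hbd1
  rw [E3] at hbe3 hbd3
  rw [E5] at hbe5 hbd5
  nlinarith [mul_nonneg hM0 (pow_nonneg h0.le 6), pow_nonneg h0.le 6]
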